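/- Let v = (v_0,...,v_{2k}) ∈ ℝ^{2k+1} be a singular sequence (its Hankel matrix A_v is singular) that is positively recursively generated with coefficients φ_0,...,φ_{r-1} (r = rank v) satisfying φ_0 ≠ 0. Then v is negatively recursively generated with coefficients ψ_j = −φ_{j+1}/φ_0 for j = 0,...,r−2 and ψ_{r-1} = 1/φ_0; in particular v is recursively generated. -/

import Mathlib

open Matrix MeasureTheory

noncomputable section

/-- The `(k+1) × (k+1)` Hankel matrix `A_v = (v_{i+j})_{i,j=0}^k`. -/
def hankel (k : ℕ) (v : ℕ → ℝ) : Matrix (Fin (k+1)) (Fin (k+1)) ℝ :=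
  Matrix.of fun i j => v (i.1 + j.1)

/-- The top-left `r × r` corner `A_v(r-1) = (v_{i+j})_{i,j=0}^{r-1}`. -/
def hcorner (v : ℕ → ℝ) (r : ℕ) : Matrix (Fin r) (Fin r) ℝ :=
  Matrix.of fun i j => v (i.1 + j.1)

/-- The `(j+1)`-th column of the Hankel matrix `A_v`. -/
def hcol (k : ℕ) (v : ℕ → ℝ) (j : ℕ) : Fin (k+1) → ℝ :=
  fun i => v (i.1 + j)

/-- `r = rank v`: column `v_r` lies in the span of the preceding columns, and `r`
is minimal with this property. -/
def seqRank (k : ℕ) (v : ℕ → ℝ) (r : ℕ) : Prop :=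
  hcol k v r ∈ Submodule.span ℝ (hcol k v '' {j | j < r}) ∧
  ∀ i < r, hcol k v i ∉ Submodule.span ℝ (hcol k v '' {j | j < i})

/-- `φ = A_v(r-1)⁻¹ (v_r,…,v_{2r-1})ᵀ`. -/
def phi (v : ℕ → ℝ) (r : ℕ) : Fin r → ℝ :=
  (hcorner v r)⁻¹.mulVec fun i => v (r + i.1)

def coefAux (r : ℕ) (φ : Fin r → ℝ) (j : ℕ) (s : Fin r) : ℝ :=
  if j < r then (if s.1 = j then 1 else 0)
  else ∑ t : Fin r, φ t * coefAux r φ (j - r + t.1) s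
termination_by j
decreasing_by
  have := t.isLt; omega

lemma coefAux_lt {r : ℕ} {φ : Fin r → ℝ} {j : ℕ} (h : j < r) (s : Fin r) :
    coefAux r φ j s = if s.1 = j then 1 else 0 := by
  rw [coefAux]; simp [h]

lemma coefAux_ge {r : ℕ} {φ : Fin r → ℝ} {j : ℕ} (h : r ≤ j) (s : Fin r) :
    coefAux r φ j s = ∑ t : Fin r, φ t * coefAux r φ (j - r + t.1) s := by
  rw [coefAux]; simp [Nat.not_lt.2 h]

lemma coef_spec (k r : ℕ) (v : ℕ → ℝ) (φ : Fin r → ℝ)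
    (hrec : ∀ j, r ≤ j → j ≤ 2*k → v j = ∑ t : Fin r, φ t * v (j - r + t.1)) :
    ∀ j p, p + j ≤ 2*k → v (p + j) = ∑ s : Fin r, coefAux r φ j s * v (p + s.1) := by
  intro j
  induction j using Nat.strong_induction_on with
  | _ j ih =>
    intro p hpj
    by_cases h : j < r
    · have key : ∀ s : Fin r, coefAux r φ j s * v (p + s.1)
          = if s = ⟨j, h⟩ then v (p + j) else 0 := by
        intro s
        rw [coefAux_lt h]
        rcases eq_or_ne s ⟨j, h⟩ with hs | hs
        · subst hs; simp
        · have : s.1 ≠ j := fun hc => hs (Fin.ext hc)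
          simp [this, hs]
      rw [Finset.sum_congr rfl fun s _ => key s, Finset.sum_ite_eq' Finset.univ,
        if_pos (Finset.mem_univ _)]
    · push_neg at h
      calc v (p + j) = ∑ t : Fin r, φ t * v ((p + j) - r + t.1) :=
            hrec _ (le_trans h (Nat.le_add_left _ _)) hpj
        _ = ∑ t : Fin r, φ t * v (p + (j - r + t.1)) := by
            refine Finset.sum_congr rfl fun t _ => ?_
            congr 2; omega
        _ = ∑ t : Fin r, φ t * ∑ s : Fin r, coefAux r φ (j - r + t.1) s * v (p + s.1) := by
            refine Finset.sum_congr rfl fun t _ => ?_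
            rw [ih _ (by have := t.isLt; omega) p (by have := t.isLt; omega)]
        _ = ∑ s : Fin r, coefAux r φ j s * v (p + s.1) := by
            simp only [coefAux_ge h, Finset.sum_mul, Finset.mul_sum]
            rw [Finset.sum_comm]
            exact Finset.sum_congr rfl fun s _ => Finset.sum_congr rfl fun t _ => by ring

theorem stmt5 (k r : ℕ) (v : ℕ → ℝ) (hsing : (hankel k v).det = 0)
    (hr0 : 0 < r) (hr : r ≤ k) (hrank : seqRank k v r)
    (hpd : (hcorner v r).PosDef)
    (hprg : ∀ j, r ≤ j → j ≤ 2*k → v j = ∑ i : Fin r, phi v r i * v (j - r + i.1))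
    (hphi0 : phi v r ⟨0, hr0⟩ ≠ 0) :
    (Matrix.of fun a b : Fin r => v (2*k - 2*r + 2 + a.1 + b.1)).PosDef ∧
    ∀ j, j + r ≤ 2*k →
      v (2*k - r - j) =
        ∑ i : Fin r,
          (if h : i.1 + 1 < r then -(phi v r ⟨i.1 + 1, h⟩) / phi v r ⟨0, hr0⟩
           else 1 / phi v r ⟨0, hr0⟩) * v (2*k - r + 1 - j + i.1) := by
  obtain ⟨r', rfl⟩ : ∃ r', r = r' + 1 := ⟨r - 1, by omega⟩
  set R := r' + 1 with hR
  set φ := phi v R with hφdef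
  set c0 := φ ⟨0, hr0⟩ with hc0def
  have hc0 : c0 ≠ 0 := hphi0
  -- backward recursion
  have back : ∀ m, m + R ≤ 2*k →
      v m = ∑ i : Fin R,
        (if h : i.1 + 1 < R then -(φ ⟨i.1 + 1, h⟩) / c0 else 1 / c0) * v (m + 1 + i.1) := by
    intro m hm2k
    have hm : v (m + R) = ∑ i : Fin R, φ i * v (m + i.1) := by
      have h2 := hprg (m + R) (by omega) (by omega)
      rw [h2]
      refine Finset.sum_congr rfl fun i _ => ?_
      congr 2; omega
    rw [Fin.sum_univ_succ] at hm
    rw [Fin.sum_univ_castSucc]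
    have hlast : (if h : (Fin.last r').1 + 1 < R then -(φ ⟨(Fin.last r').1 + 1, h⟩) / c0
        else 1 / c0) = 1 / c0 := by
      rw [dif_neg]; simp [Fin.val_last, hR]
    rw [hlast]
    have hterm : ∀ i : Fin r',
        (if h : (i.castSucc).1 + 1 < R then -(φ ⟨(i.castSucc).1 + 1, h⟩) / c0 else 1 / c0)
          * v (m + 1 + (i.castSucc).1)
        = -(1/c0) * (φ i.succ * v (m + (i.succ).1)) := by
      intro i
      have hcond : (i.castSucc).1 + 1 < R := by
        have := i.isLt; simp only [Fin.coe_castSucc]; omega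
      have hcoef : (if h : (i.castSucc).1 + 1 < R then -(φ ⟨(i.castSucc).1 + 1, h⟩) / c0
          else 1 / c0) = -(φ i.succ) / c0 := by
        rw [dif_pos hcond]
        congr 2
      have h2 : m + (i.succ).1 = m + 1 + (i.castSucc).1 := by
        simp only [Fin.val_succ, Fin.coe_castSucc]; omega
      rw [hcoef, h2]; ring
    rw [Finset.sum_congr rfl fun i _ => hterm i, ← Finset.mul_sum]
    have h3 : m + 1 + (Fin.last r').1 = m + R := by
      simp only [Fin.val_last]; omega
    rw [h3, hm]
    have h0 : φ 0 = c0 := rfl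
    rw [h0]
    simp only [Fin.val_zero, Nat.add_zero]
    field_simp
    ring
  -- main part
  have L1 := coef_spec k R v φ hprg
  set q := k - r' with hq
  set C := coefAux R φ with hC
  set M := hcorner v R with hM
  set G : Matrix (Fin R) (Fin R) ℝ := Matrix.of (fun s a : Fin R => C (q + a.1) s) with hG
  have hBG : (Matrix.of fun a b : Fin R => v (2*k - 2*R + 2 + a.1 + b.1)) = Gᵀ * M * G := by
    ext a b
    have ha := a.isLt; have hb := b.isLt
    have e1 : 2*k - 2*R + 2 + a.1 + b.1 = (q + a.1) + (q + b.1) := by omega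
    have step1 : v ((q + a.1) + (q + b.1)) = ∑ t : Fin R, C (q + b.1) t * v ((q + a.1) + t.1) :=
      L1 (q + b.1) (q + a.1) (by omega)
    have step2 : ∀ t : Fin R, v ((q + a.1) + t.1) = ∑ s : Fin R, C (q + a.1) s * v (t.1 + s.1) := by
      intro t
      have ht := t.isLt
      have := L1 (q + a.1) t.1 (by omega)
      rw [← this, Nat.add_comm]
    show v (2*k - 2*R + 2 + a.1 + b.1) = (Gᵀ * M * G) a b
    calc v (2*k - 2*R + 2 + a.1 + b.1)
        = ∑ t : Fin R, C (q + b.1) t * v ((q + a.1) + t.1) := by rw [e1, step1]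
      _ = ∑ t : Fin R, C (q + b.1) t * ∑ s : Fin R, C (q + a.1) s * v (t.1 + s.1) :=
          Finset.sum_congr rfl fun t _ => by rw [step2 t]
      _ = (Gᵀ * M * G) a b := by
          rw [Matrix.mul_apply]
          refine Finset.sum_congr rfl fun t _ => ?_
          rw [Matrix.mul_apply, Finset.sum_mul, Finset.mul_sum]
          refine Finset.sum_congr rfl fun s _ => ?_
          simp only [Matrix.transpose_apply, Matrix.of_apply, hM, hcorner, hG]
          rw [Nat.add_comm t.1 s.1]
          ring
  -- injectivity of G
  have hGinj : ∀ x : Fin R → ℝ, G.mulVec x = 0 → x = 0 := by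
    intro x hGx
    have hz : ∀ s : Fin R, (∑ a : Fin R, C (q + a.1) s * x a) = 0 := by
      intro s
      have := congrFun hGx s
      simpa [Matrix.mulVec, dotProduct, hG] using this
    have hu0 : ∀ i, i ≤ k → (∑ a : Fin R, x a * v ((q + i) + a.1)) = 0 := by
      intro i hi
      have key : ∀ a : Fin R, v ((q + i) + a.1) = ∑ s : Fin R, C (q + a.1) s * v (i + s.1) := by
        intro a
        have ha := a.isLt
        have e : (q + i) + a.1 = i + (q + a.1) := by omega
        rw [e]
        exact L1 (q + a.1) i (by omega)
      rw [Finset.sum_congr rfl fun a _ => by rw [key a]]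
      simp only [Finset.mul_sum]
      rw [Finset.sum_comm]
      calc (∑ s : Fin R, ∑ a : Fin R, x a * (C (q + a.1) s * v (i + s.1)))
          = ∑ s : Fin R, (∑ a : Fin R, C (q + a.1) s * x a) * v (i + s.1) := by
            refine Finset.sum_congr rfl fun s _ => ?_
            rw [Finset.sum_mul]
            exact Finset.sum_congr rfl fun a _ => by ring
        _ = 0 := by simp [hz]
    have hu : ∀ n m, m ≤ k + q → q ≤ m + n → (∑ a : Fin R, x a * v (m + a.1)) = 0 := by
      intro n
      induction n with
      | zero =>
        intro m hm1 hm2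
        have : m = q + (m - q) := by omega
        rw [this]
        exact hu0 (m - q) (by omega)
      | succ n ihn =>
        intro m hm1 hm2
        by_cases hqm : q ≤ m
        · have : m = q + (m - q) := by omega
          rw [this]
          exact hu0 (m - q) (by omega)
        · push_neg at hqm
          have hstep : ∀ a : Fin R, c0 * v (m + a.1)
              = v ((m + R) + a.1) - ∑ t : Fin r', φ t.succ * v ((m + (t.succ).1) + a.1) := by
            intro a
            have ha := a.isLt
            have h2 := hprg (m + a.1 + R) (by omega) (by omega)
            have h3 : v (m + a.1 + R) = ∑ t : Fin R, φ t * v (m + a.1 + t.1) := by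
              rw [h2]
              exact Finset.sum_congr rfl fun t _ => by congr 2; omega
            rw [Fin.sum_univ_succ] at h3
            have e0 : m + a.1 + ((0 : Fin R) : ℕ) = m + a.1 := by simp
            have e1 : m + a.1 + R = (m + R) + a.1 := by omega
            rw [e0, e1] at h3
            have h0 : φ 0 = c0 := rfl
            rw [h0] at h3
            rw [Finset.sum_congr rfl fun t : Fin r' => fun _ => by
              rw [show m + a.1 + ((t.succ : Fin R) : ℕ) = (m + (t.succ).1) + a.1 by omega]] at h3
            linarith [h3]
          have hmain : c0 * (∑ a : Fin R, x a * v (m + a.1))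
              = (∑ a : Fin R, x a * v ((m + R) + a.1))
                - ∑ t : Fin r', φ t.succ * (∑ a : Fin R, x a * v ((m + (t.succ).1) + a.1)) := by
            rw [Finset.mul_sum]
            calc (∑ a : Fin R, c0 * (x a * v (m + a.1)))
                = ∑ a : Fin R, (x a * v ((m + R) + a.1)
                    - ∑ t : Fin r', φ t.succ * (x a * v ((m + (t.succ).1) + a.1))) := by
                  refine Finset.sum_congr rfl fun a _ => ?_
                  have : c0 * (x a * v (m + a.1)) = x a * (c0 * v (m + a.1)) := by ring
                  rw [this, hstep a, mul_sub]
                  congr 1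
                  rw [Finset.mul_sum]
                  exact Finset.sum_congr rfl fun t _ => by ring
              _ = (∑ a : Fin R, x a * v ((m + R) + a.1))
                    - ∑ a : Fin R, ∑ t : Fin r', φ t.succ * (x a * v ((m + (t.succ).1) + a.1)) :=
                  Finset.sum_sub_distrib _ _
              _ = (∑ a : Fin R, x a * v ((m + R) + a.1))
                    - ∑ t : Fin r', φ t.succ * (∑ a : Fin R, x a * v ((m + (t.succ).1) + a.1)) := by
                  congr 1
                  rw [Finset.sum_comm]
                  exact Finset.sum_congr rfl fun t _ => (Finset.mul_sum _ _ _).symm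
          have hA : (∑ a : Fin R, x a * v ((m + R) + a.1)) = 0 :=
            ihn (m + R) (by omega) (by omega)
          have hB : ∀ t : Fin r', (∑ a : Fin R, x a * v ((m + (t.succ).1) + a.1)) = 0 := by
            intro t
            have ht := t.isLt
            have hts : ((t.succ : Fin R) : ℕ) = t.1 + 1 := rfl
            exact ihn (m + (t.succ).1) (by omega) (by omega)
          have hz0 : c0 * (∑ a : Fin R, x a * v (m + a.1)) = 0 := by
            rw [hmain, hA]
            simp only [Fin.val_succ] at hB
            simp [hB]
          exact (mul_eq_zero.mp hz0).resolve_left hc0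
    have hMx : M.mulVec x = 0 := by
      funext p
      have hp := p.isLt
      show (M.mulVec x) p = 0
      calc (M.mulVec x) p = ∑ a : Fin R, v (p.1 + a.1) * x a := by
            simp [Matrix.mulVec, dotProduct, hM, hcorner]
        _ = ∑ a : Fin R, x a * v (p.1 + a.1) := Finset.sum_congr rfl fun a _ => mul_comm _ _
        _ = 0 := hu q p.1 (by omega) (by omega)
    by_contra hxne
    have hlt := hpd.dotProduct_mulVec_pos hxne
    rw [hMx] at hlt
    simp at hlt
  constructor
  · -- positive definiteness
    refine Matrix.PosDef.of_dotProduct_mulVec_pos ?_ ?_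
    · show _ᴴ = _
      ext a b
      simp only [Matrix.conjTranspose_apply, Matrix.of_apply, star_trivial]
      congr 1
      omega
    · intro x hx
      have hGxne : G.mulVec x ≠ 0 := fun h => hx (hGinj x h)
      have hpos := hpd.dotProduct_mulVec_pos hGxne
      have e : star x ⬝ᵥ (Matrix.of fun a b : Fin R => v (2*k - 2*R + 2 + a.1 + b.1)).mulVec x
          = star (G.mulVec x) ⬝ᵥ M.mulVec (G.mulVec x) := by
        rw [hBG]
        simp only [star_trivial]
        rw [Matrix.mul_assoc, ← Matrix.mulVec_mulVec, Matrix.dotProduct_mulVec,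
          Matrix.vecMul_transpose, ← Matrix.mulVec_mulVec]
      rw [e]
      exact hpos
  · -- backward recursion
    intro j hj
    have hb := back (2*k - R - j) (by omega)
    rw [show 2*k - R - j = 2*k - R - j from rfl] at hb
    rw [hb]
    refine Finset.sum_congr rfl fun i _ => ?_
    congr 1
    congr 1
    omega
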